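/- arXiv:1905.08268 — 2 statements merged into one kernel-verified Lean document; each statement's English description precedes it below -/
import Mathlib

section
/- For a pure bipartite state ρ_AR with Schmidt coefficient distribution P_X, the bipartite SDP f_max(P_X, ε) = inf { λ : λ·𝟙_A ⊗ ρ_R ≥ σ_AR, Tr[ρ_AR σ_AR] ≥ 1 − ε², σ_R ≤ ρ_R, σ_AR ≥ 0 } equals the single-system SDP f_SDP(P_X, ε) = inf { λ : λ·𝟙 ≥ θ, 𝒫(θ) ≤ 𝟙, Tr[ψ_X θ] ≥ 1 − ε², θ ≥ 0 }. -/
open Matrix Finset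
open scoped ComplexOrder Kronecker

/-- Outer product `|v⟩⟨v|`. -/
noncomputable def outer {n : Type*} (v : n → ℂ) : Matrix n n ℂ :=
  Matrix.of fun i j => v i * star (v j)

/-- Partial trace over the first (A) factor. -/
noncomputable def ptraceA {dA dR : ℕ} (σ : Matrix (Fin dA × Fin dR) (Fin dA × Fin dR) ℂ) :
    Matrix (Fin dR) (Fin dR) ℂ :=
  Matrix.of fun r r' => ∑ a, σ (a, r) (a, r')

/-- The purification vector `|ρ⟩ = Σ_x √(p_x) |xx⟩`. -/
noncomputable def schmidtVec {d : ℕ} (p : Fin d → ℝ) : Fin d × Fin d → ℂ :=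
  fun xy => if xy.1 = xy.2 then (Real.sqrt (p xy.1) : ℂ) else 0

/-- The bipartite SDP `f_max(P_X, ε)` for the pure state with Schmidt coefficients `p`. -/
noncomputable def fMax {d : ℕ} (p : Fin d → ℝ) (ε : ℝ) : ℝ :=
  sInf {l : ℝ | 0 ≤ l ∧ ∃ σ : Matrix (Fin d × Fin d) (Fin d × Fin d) ℂ,
    ((l : ℂ) • ((1 : Matrix (Fin d) (Fin d) ℂ) ⊗ₖ (Matrix.diagonal fun x => (p x : ℂ))) - σ).PosSemidef ∧
    1 - ε ^ 2 ≤ (((outer (schmidtVec p)) * σ).trace).re ∧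
    ((Matrix.diagonal fun x => (p x : ℂ)) - ptraceA σ).PosSemidef ∧
    σ.PosSemidef}

/-- The pinching map `𝒫(θ) = Σ_x |x⟩⟨x| ⟨x|θ|x⟩`. -/
noncomputable def pinch {d : ℕ} (θ : Matrix (Fin d) (Fin d) ℂ) : Matrix (Fin d) (Fin d) ℂ :=
  Matrix.diagonal fun x => θ x x

/-- The single-system SDP `f_SDP(P_X, ε)`, with `ψ_X = |ψ_X⟩⟨ψ_X|`, `|ψ_X⟩ = Σ_x p_x |x⟩`. -/
noncomputable def fSDP {d : ℕ} (p : Fin d → ℝ) (ε : ℝ) : ℝ :=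
  sInf {l : ℝ | 0 ≤ l ∧ ∃ θ : Matrix (Fin d) (Fin d) ℂ,
    ((l : ℂ) • (1 : Matrix (Fin d) (Fin d) ℂ) - θ).PosSemidef ∧
    ((1 : Matrix (Fin d) (Fin d) ℂ) - pinch θ).PosSemidef ∧
    1 - ε ^ 2 ≤ (((outer fun x => (p x : ℂ)) * θ).trace).re ∧
    θ.PosSemidef}

/-! ### Auxiliary lemmas -/

section Aux

lemma psd_diag_nonneg {n : Type*} [Fintype n] [DecidableEq n] {M : Matrix n n ℂ}
    (h : M.PosSemidef) (i : n) : 0 ≤ M i i := by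
  exact h.diag_nonneg

lemma psd_add {n : Type*} [Fintype n] {M N : Matrix n n ℂ}
    (hM : M.PosSemidef) (hN : N.PosSemidef) : (M + N).PosSemidef := by
  exact hM.add hN

lemma conj_outer {n m : Type*} [Fintype n] [Fintype m] (B : Matrix n m ℂ) (v : n → ℂ) :
    Bᴴ * outer v * B = outer (Bᴴ *ᵥ v) := by
  ext i j
  simp [outer, Matrix.mul_apply, Matrix.mulVec, Matrix.conjTranspose_apply, dotProduct,
    Finset.sum_mul, Finset.mul_sum, map_sum]
  congr 1; ext k; congr 1; ext l; ring

lemma trace_outer_conj {n m : Type*} [Fintype n] [Fintype m]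
    (B : Matrix n m ℂ) (M : Matrix m m ℂ) (v : n → ℂ) :
    (outer v * (B * M * Bᴴ)).trace = (outer (Bᴴ *ᵥ v) * M).trace := by
  rw [show outer v * (B * M * Bᴴ) = ((outer v * B) * M) * Bᴴ by simp [Matrix.mul_assoc],
    Matrix.trace_mul_cycle,
    show Bᴴ * (outer v * B) * M = (Bᴴ * outer v * B) * M by simp [Matrix.mul_assoc],
    conj_outer]

variable {d : ℕ}

/-- `E : ℂ^d → ℂ^{d×d}`, `E|x⟩ = √(p x) |x,x⟩`. -/
noncomputable def embE (p : Fin d → ℝ) : Matrix (Fin d × Fin d) (Fin d) ℂ :=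
  Matrix.of fun ar x => if ar.1 = x ∧ ar.2 = x then (Real.sqrt (p x) : ℂ) else 0

/-- `F : ℂ^{d×d} → ℂ^d`, compression `F|x,x⟩ = (√(p x))⁻¹ |x⟩`. -/
noncomputable def embF (p : Fin d → ℝ) : Matrix (Fin d) (Fin d × Fin d) ℂ :=
  Matrix.of fun x ar => if ar.1 = x ∧ ar.2 = x then ((Real.sqrt (p x))⁻¹ : ℂ) else 0

lemma embE_conj_apply (p : Fin d → ℝ) (θ : Matrix (Fin d) (Fin d) ℂ) (a r a' r' : Fin d) :
    (embE p * θ * (embE p)ᴴ) (a, r) (a', r')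
      = (if a = r then ((Real.sqrt (p a) : ℝ) : ℂ) else 0) * θ a a' *
        (if a' = r' then ((Real.sqrt (p a') : ℝ) : ℂ) else 0) := by
  simp only [Matrix.mul_apply, Matrix.conjTranspose_apply, embE, Matrix.of_apply]
  simp [ite_and, apply_ite (starRingEnd ℂ), mul_ite, ite_mul, mul_zero, zero_mul,
    Finset.sum_ite_eq, Finset.sum_ite_eq', Finset.mul_sum, Finset.sum_mul, eq_comm (a := a)]
  split_ifs <;> simp_all <;> ring

lemma embF_conj_apply (p : Fin d → ℝ) (M : Matrix (Fin d × Fin d) (Fin d × Fin d) ℂ)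
    (x y : Fin d) :
    (embF p * M * (embF p)ᴴ) x y
      = (((Real.sqrt (p x))⁻¹ : ℝ) : ℂ) * M (x, x) (y, y) * (((Real.sqrt (p y))⁻¹ : ℝ) : ℂ) := by
  simp only [Matrix.mul_apply, Matrix.conjTranspose_apply, embF, Matrix.of_apply]
  rw [Fintype.sum_prod_type]
  simp [ite_and, apply_ite (starRingEnd ℂ), mul_ite, ite_mul, mul_zero, zero_mul,
    Finset.sum_ite_eq, Finset.sum_ite_eq', Fintype.sum_prod_type, Finset.mul_sum,
    Finset.sum_mul]

lemma embE_mulVec (p : Fin d → ℝ) (hp : ∀ x, 0 ≤ p x) :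
    (embE p)ᴴ *ᵥ schmidtVec p = fun x => (p x : ℂ) := by
  funext x
  simp only [Matrix.mulVec, Matrix.conjTranspose_apply, dotProduct, embE, Matrix.of_apply,
    schmidtVec]
  rw [Fintype.sum_prod_type]
  simp [ite_and, apply_ite (starRingEnd ℂ), mul_ite, ite_mul, mul_zero, zero_mul,
    Finset.sum_ite_eq, Finset.sum_ite_eq', ← Complex.ofReal_mul, Real.mul_self_sqrt (hp x)]

lemma embF_mulVec (p : Fin d → ℝ) (hp : ∀ x, 0 ≤ p x) :
    (embF p)ᴴ *ᵥ (fun x => (p x : ℂ)) = schmidtVec p := by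
  funext ar
  obtain ⟨a, r⟩ := ar
  simp only [Matrix.mulVec, Matrix.conjTranspose_apply, dotProduct, embF, Matrix.of_apply,
    schmidtVec]
  by_cases h : a = r
  · subst h
    simp [ite_and, apply_ite (starRingEnd ℂ), mul_ite, ite_mul, mul_zero, zero_mul,
      Finset.sum_ite_eq, Finset.sum_ite_eq']
    norm_cast
    rw [inv_mul_eq_div, Real.div_sqrt]
  · simp only [h, if_false]
    apply Finset.sum_eq_zero
    intro x _
    by_cases h1 : a = x <;> by_cases h2 : r = x <;> simp_all

lemma kron_decomp (p : Fin d → ℝ) (hp : ∀ x, 0 ≤ p x) :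
    (1 : Matrix (Fin d) (Fin d) ℂ) ⊗ₖ (Matrix.diagonal fun x => (p x : ℂ))
      = embE p * (1 : Matrix (Fin d) (Fin d) ℂ) * (embE p)ᴴ +
        Matrix.diagonal (fun ar : Fin d × Fin d =>
          if ar.1 = ar.2 then 0 else (p ar.2 : ℂ)) := by
  ext ⟨a, r⟩ ⟨a', r'⟩
  rw [Matrix.add_apply, embE_conj_apply]
  simp only [Matrix.kroneckerMap_apply, Matrix.one_apply, Matrix.diagonal_apply, Prod.mk.injEq]
  by_cases haa : a = a' <;> by_cases hrr : r = r' <;> by_cases har : a = r <;>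
    simp_all [← Complex.ofReal_mul, Real.mul_self_sqrt (hp _)]

lemma embF_kron (p : Fin d → ℝ) (hp : ∀ x, 0 ≤ p x) :
    embF p * ((1 : Matrix (Fin d) (Fin d) ℂ) ⊗ₖ (Matrix.diagonal fun x => (p x : ℂ))) * (embF p)ᴴ
      = Matrix.diagonal (fun x => if p x = 0 then 0 else (1 : ℂ)) := by
  ext x y
  rw [embF_conj_apply]
  simp only [Matrix.kroneckerMap_apply, Matrix.one_apply, Matrix.diagonal_apply]
  by_cases hxy : x = y
  · subst hxy
    by_cases hx : p x = 0
    · simp [hx]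
    · have hppos : 0 < p x := lt_of_le_of_ne (hp x) (Ne.symm hx)
      have hs : Real.sqrt (p x) ≠ 0 := Real.sqrt_ne_zero'.mpr hppos
      simp only [Matrix.one_apply_eq, Matrix.diagonal_apply_eq, one_mul, hx, if_false,
        eq_self_iff_true, if_true]
      rw [show (((Real.sqrt (p x))⁻¹ : ℝ) : ℂ) * (p x : ℂ) * (((Real.sqrt (p x))⁻¹ : ℝ) : ℂ)
          = (((Real.sqrt (p x))⁻¹ * p x * (Real.sqrt (p x))⁻¹ : ℝ) : ℂ) by push_cast; ring]
      norm_cast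
      field_simp
      rw [Real.sq_sqrt (hp x)]
  · simp [hxy]

lemma ptraceA_embE (p : Fin d → ℝ) (hp : ∀ x, 0 ≤ p x) (θ : Matrix (Fin d) (Fin d) ℂ) :
    ptraceA (embE p * θ * (embE p)ᴴ)
      = Matrix.diagonal (fun r => (p r : ℂ) * θ r r) := by
  ext r r'
  simp only [ptraceA, Matrix.of_apply, embE_conj_apply]
  by_cases h : r = r'
  · subst h
    rw [Matrix.diagonal_apply_eq, Finset.sum_eq_single r]
    · simp only [eq_self_iff_true, if_true]
      rw [show ((Real.sqrt (p r) : ℝ) : ℂ) * θ r r * ((Real.sqrt (p r) : ℝ) : ℂ)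
          = ((Real.sqrt (p r) * Real.sqrt (p r) : ℝ) : ℂ) * θ r r by push_cast; ring,
        Real.mul_self_sqrt (hp r)]
    · intro a _ ha
      simp [if_neg ha]
    · simp
  · rw [Matrix.diagonal_apply_ne _ h]
    apply Finset.sum_eq_zero
    intro a _
    by_cases h1 : a = r <;> by_cases h2 : a = r' <;> simp_all

end Aux

/-- for a pure bipartite state with Schmidt distribution `P_X`,
`f_max(P_X, ε) = f_SDP(P_X, ε)`. -/
theorem fMax_eq_fSDP {d : ℕ} (p : Fin d → ℝ) (hp : ∀ x, 0 ≤ p x)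
    (hps : ∑ x, p x = 1) (ε : ℝ) (hε : ε ∈ Set.Ioo (0 : ℝ) 1) :
    fMax p ε = fSDP p ε := by
  unfold fMax fSDP
  congr 1
  ext l
  simp only [Set.mem_setOf_eq]
  constructor
  · rintro ⟨hl, σ, h1, h2, h3, h4⟩
    refine ⟨hl, embF p * σ * (embF p)ᴴ, ?_, ?_, ?_, ?_⟩
    · -- l•1 - FσFᴴ PSD
      have hdec : (l : ℂ) • (1 : Matrix (Fin d) (Fin d) ℂ) - embF p * σ * (embF p)ᴴ
          = embF p * ((l : ℂ) • ((1 : Matrix (Fin d) (Fin d) ℂ) ⊗ₖ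
              (Matrix.diagonal fun x => (p x : ℂ))) - σ) * (embF p)ᴴ +
            Matrix.diagonal (fun x => (l : ℂ) * (if p x = 0 then 1 else 0)) := by
        rw [Matrix.mul_sub, Matrix.sub_mul, Matrix.mul_smul, Matrix.smul_mul, embF_kron p hp]
        ext x y
        simp only [Matrix.sub_apply, Matrix.add_apply, Matrix.smul_apply, Matrix.one_apply,
          Matrix.diagonal_apply, smul_eq_mul]
        by_cases hxy : x = y
        · subst hxy
          by_cases hx : p x = 0 <;> simp [hx] <;> ring
        · simp [hxy]
      rw [hdec]
      refine psd_add (h1.mul_mul_conjTranspose_same _) (Matrix.posSemidef_diagonal_iff.mpr ?_)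
      intro x
      by_cases hx : p x = 0 <;> simp [hx, Complex.zero_le_real.mpr hl]
    · -- pinch constraint
      have hθ : ∀ x : Fin d, (embF p * σ * (embF p)ᴴ) x x
          = (((Real.sqrt (p x))⁻¹ : ℝ) : ℂ) * σ (x, x) (x, x) * (((Real.sqrt (p x))⁻¹ : ℝ) : ℂ) :=
        fun x => embF_conj_apply p σ x x
      have hpin : (1 : Matrix (Fin d) (Fin d) ℂ) - pinch (embF p * σ * (embF p)ᴴ)
          = Matrix.diagonal (fun x =>
              1 - (((Real.sqrt (p x))⁻¹ : ℝ) : ℂ) * σ (x, x) (x, x) *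
                (((Real.sqrt (p x))⁻¹ : ℝ) : ℂ)) := by
        ext x y
        by_cases hxy : x = y
        · subst hxy
          simp [pinch, Matrix.sub_apply, Matrix.one_apply, Matrix.diagonal_apply,
            embF_conj_apply]
        · simp [pinch, Matrix.sub_apply, Matrix.one_apply, Matrix.diagonal_apply, hxy]
      rw [hpin]
      refine Matrix.posSemidef_diagonal_iff.mpr fun x => ?_
      by_cases hx : p x = 0
      · simp [hx]
      · have hq0 : 0 ≤ σ (x, x) (x, x) := psd_diag_nonneg h4 (x, x)
        have hqp : (σ (x, x) (x, x)).re ≤ p x := by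
          have hdd := psd_diag_nonneg h3 x
          rw [Complex.nonneg_iff] at hdd
          have hre : 0 ≤ (p x : ℝ) - ∑ a, (σ (a, x) (a, x)).re := by
            simpa [ptraceA, Complex.sub_re, Complex.re_sum] using hdd.1
          have hsingle : (σ (x, x) (x, x)).re ≤ ∑ a, (σ (a, x) (a, x)).re := by
            refine Finset.single_le_sum (f := fun a => (σ (a, x) (a, x)).re) ?_ (Finset.mem_univ x)
            intro a _
            exact (Complex.nonneg_iff.mp (psd_diag_nonneg h4 (a, x))).1
          linarith
        rw [Complex.nonneg_iff] at hq0 ⊢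
        have hppos : 0 < p x := lt_of_le_of_ne (hp x) (Ne.symm hx)
        have him : (σ (x, x) (x, x)).im = 0 := hq0.2.symm
        have hinv : (Real.sqrt (p x))⁻¹ * (Real.sqrt (p x))⁻¹ = (p x)⁻¹ := by
          rw [← mul_inv]
          congr 1
          exact Real.mul_self_sqrt (hp x)
        have hb : 0 ≤ (Real.sqrt (p x))⁻¹ := inv_nonneg.mpr (Real.sqrt_nonneg _)
        have h1' : (Real.sqrt (p x))⁻¹ * (σ (x, x) (x, x)).re * (Real.sqrt (p x))⁻¹ ≤ 1 := by
          calc (Real.sqrt (p x))⁻¹ * (σ (x, x) (x, x)).re * (Real.sqrt (p x))⁻¹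
              ≤ (Real.sqrt (p x))⁻¹ * p x * (Real.sqrt (p x))⁻¹ := by
                exact mul_le_mul_of_nonneg_right (mul_le_mul_of_nonneg_left hqp hb) hb
            _ = ((Real.sqrt (p x))⁻¹ * (Real.sqrt (p x))⁻¹) * p x := by ring
            _ = 1 := by rw [hinv, inv_mul_cancel₀ hx]
        constructor
        · simp only [Complex.sub_re, Complex.one_re, Complex.mul_re, Complex.mul_im,
            Complex.ofReal_re, Complex.ofReal_im, him, mul_zero, zero_mul, sub_zero,
            add_zero, zero_add]
          linarith
        · simp [Complex.sub_im, Complex.mul_im, Complex.ofReal_im, Complex.ofReal_re, him]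
    · -- trace condition
      rwa [trace_outer_conj, embF_mulVec p hp]
    · exact h4.mul_mul_conjTranspose_same _
  · rintro ⟨hl, θ, h1, h2, h3, h4⟩
    refine ⟨hl, embE p * θ * (embE p)ᴴ, ?_, ?_, ?_, ?_⟩
    · -- l•(1⊗D) - EθEᴴ PSD
      have hdec : (l : ℂ) • ((1 : Matrix (Fin d) (Fin d) ℂ) ⊗ₖ
            (Matrix.diagonal fun x => (p x : ℂ))) - embE p * θ * (embE p)ᴴ
          = embE p * ((l : ℂ) • (1 : Matrix (Fin d) (Fin d) ℂ) - θ) * (embE p)ᴴ +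
            Matrix.diagonal (fun ar : Fin d × Fin d =>
              (l : ℂ) * (if ar.1 = ar.2 then 0 else (p ar.2 : ℂ))) := by
        rw [Matrix.mul_sub, Matrix.sub_mul, Matrix.mul_smul, Matrix.smul_mul, kron_decomp p hp]
        ext ⟨a, r⟩ ⟨a', r'⟩
        simp only [Matrix.sub_apply, Matrix.add_apply, Matrix.smul_apply, Matrix.diagonal_apply,
          smul_eq_mul]
        by_cases haa : (a, r) = (a', r') <;> by_cases har : a = r <;>
          simp [haa, har] <;> ring
      rw [hdec]
      refine psd_add (h1.mul_mul_conjTranspose_same _) (Matrix.posSemidef_diagonal_iff.mpr ?_)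
      intro ⟨a, r⟩
      by_cases har : a = r
      · simp [har]
      · simp only [har, if_false]
        rw [← Complex.ofReal_mul]
        exact Complex.zero_le_real.mpr (mul_nonneg hl (hp r))
    · -- trace condition
      rwa [trace_outer_conj, embE_mulVec p hp]
    · -- partial trace constraint
      rw [ptraceA_embE p hp, Matrix.diagonal_sub]
      refine Matrix.posSemidef_diagonal_iff.mpr fun r => ?_
      have h2r : 0 ≤ 1 - θ r r := by
        have := psd_diag_nonneg h2 r
        simpa [pinch, Matrix.diagonal_apply] using this
      rw [Complex.nonneg_iff] at h2r ⊢
      constructor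
      · simp only [Complex.sub_re, Complex.mul_re, Complex.ofReal_re, Complex.ofReal_im,
          Complex.one_re] at h2r ⊢
        nlinarith [hp r, h2r.1]
      · simp only [Complex.sub_im, Complex.mul_im, Complex.ofReal_re, Complex.ofReal_im,
          Complex.one_im] at h2r ⊢
        have him : (θ r r).im = 0 := by linarith [h2r.2]
        simp [him]
    · exact h4.mul_mul_conjTranspose_same _
end

section
/- For any probability distribution P_X on a finite set and ε ∈ (0,1), the single-system SDP f_SDP(P_X, ε) := inf { λ : λ·𝟙 ≥ θ, 𝒫(θ) ≤ 𝟙, Tr[ψ_X θ] ≥ 1 − ε², θ ≥ 0 } equals the quadratic program f_QP(P_X, ε) := inf { Σ_x g_x² : Σ_x g_x p_x ≥ √(1−ε²), 0 ≤ g_x ≤ 1 }. -/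
open Matrix Finset
open scoped ComplexOrder

/-- The quadratic program `f_QP(P_X, ε)` from the paper. -/
noncomputable def fQP {d : ℕ} (p : Fin d → ℝ) (ε : ℝ) : ℝ :=
  sInf {v : ℝ | ∃ g : Fin d → ℝ, (∀ x, 0 ≤ g x ∧ g x ≤ 1) ∧
    Real.sqrt (1 - ε ^ 2) ≤ ∑ x, g x * p x ∧ v = ∑ x, (g x) ^ 2}

lemma conj_mul_self (z : ℂ) : (starRingEnd ℂ) z * z = ((‖z‖^2 : ℝ) : ℂ) := by
  rw [mul_comm, Complex.mul_conj']; push_cast; ring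

lemma cs_aux {d : ℕ} (u v : Fin d → ℂ) :
    ‖∑ i, (starRingEnd ℂ) (u i) * v i‖ ^ 2 ≤ (∑ i, ‖u i‖ ^ 2) * (∑ i, ‖v i‖ ^ 2) := by
  set U : EuclideanSpace ℂ (Fin d) := WithLp.toLp 2 u with hU
  set V : EuclideanSpace ℂ (Fin d) := WithLp.toLp 2 v with hV
  have h := norm_inner_le_norm (𝕜 := ℂ) U V
  rw [EuclideanSpace.norm_eq, EuclideanSpace.norm_eq] at h
  have h2 : (inner ℂ U V : ℂ) = ∑ i, (starRingEnd ℂ) (u i) * v i := by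
    rw [PiLp.inner_apply]; simp [RCLike.inner_apply, hU, hV, mul_comm]
  rw [h2] at h
  have hu : (0:ℝ) ≤ ∑ i, ‖u i‖ ^ 2 := by positivity
  have hv : (0:ℝ) ≤ ∑ i, ‖v i‖ ^ 2 := by positivity
  calc ‖∑ i, (starRingEnd ℂ) (u i) * v i‖ ^ 2
      ≤ (Real.sqrt (∑ i, ‖u i‖ ^ 2) * Real.sqrt (∑ i, ‖v i‖ ^ 2)) ^ 2 :=
        pow_le_pow_left₀ (norm_nonneg _) h 2
    _ = (∑ i, ‖u i‖ ^ 2) * (∑ i, ‖v i‖ ^ 2) := by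
        rw [mul_pow, Real.sq_sqrt hu, Real.sq_sqrt hv]

lemma star_dot_self {d : ℕ} (w : Fin d → ℂ) :
    star w ⬝ᵥ w = ((∑ i, ‖w i‖^2 : ℝ) : ℂ) := by
  simp only [dotProduct, Pi.star_apply, RCLike.star_def]
  push_cast
  refine Finset.sum_congr rfl fun i _ => ?_
  rw [conj_mul_self]; push_cast; ring

lemma herm_dot {d : ℕ} {S : Matrix (Fin d) (Fin d) ℂ} (hS : S.IsHermitian)
    (a b : Fin d → ℂ) : star a ⬝ᵥ (S *ᵥ b) = star (S *ᵥ a) ⬝ᵥ b := by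
  rw [Matrix.star_mulVec, Matrix.dotProduct_mulVec, hS.eq]

lemma herm_quad {d : ℕ} {S : Matrix (Fin d) (Fin d) ℂ} (hS : S.IsHermitian)
    (a : Fin d → ℂ) :
    star a ⬝ᵥ ((S * S) *ᵥ a) = ((∑ i, ‖(S *ᵥ a) i‖^2 : ℝ) : ℂ) := by
  rw [← Matrix.mulVec_mulVec, herm_dot hS, star_dot_self]

lemma trace_outer_mul {d : ℕ} (p : Fin d → ℝ) (θ : Matrix (Fin d) (Fin d) ℂ) :
    ((outer fun x => (p x : ℂ)) * θ).trace
      = star (fun x => ((p x : ℂ))) ⬝ᵥ (θ *ᵥ fun x => ((p x : ℂ))) := by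
  simp only [Matrix.trace, Matrix.diag, Matrix.mul_apply, outer, Matrix.of_apply,
    dotProduct, Pi.star_apply, Matrix.mulVec, RCLike.star_def, Complex.conj_ofReal,
    Finset.mul_sum]
  rw [Finset.sum_comm]
  refine Finset.sum_congr rfl fun j _ => ?_
  refine Finset.sum_congr rfl fun i _ => ?_
  ring

lemma exists_g_of_SDP {d : ℕ} (p : Fin d → ℝ) (hp : ∀ x, 0 ≤ p x) (ε : ℝ)
    (hε2 : 0 < 1 - ε ^ 2) (l : ℝ) (θ : Matrix (Fin d) (Fin d) ℂ)
    (h1 : ((l : ℂ) • (1 : Matrix (Fin d) (Fin d) ℂ) - θ).PosSemidef)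
    (h2 : ((1 : Matrix (Fin d) (Fin d) ℂ) - pinch θ).PosSemidef)
    (h3 : 1 - ε ^ 2 ≤ (((outer fun x => (p x : ℂ)) * θ).trace).re)
    (h4 : θ.PosSemidef) :
    ∃ g : Fin d → ℝ, (∀ x, 0 ≤ g x ∧ g x ≤ 1) ∧
      Real.sqrt (1 - ε ^ 2) ≤ ∑ x, g x * p x ∧ ∑ x, (g x)^2 ≤ l := by
  obtain ⟨S, hSH, hSS⟩ : ∃ S : Matrix (Fin d) (Fin d) ℂ, S.IsHermitian ∧ S * S = θ := by
    open scoped MatrixOrder in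
    exact ⟨CFC.sqrt θ, (Matrix.nonneg_iff_posSemidef.mp (CFC.sqrt_nonneg θ)).1,
      CFC.sqrt_mul_sqrt_self θ h4.nonneg⟩
  set ψ : Fin d → ℂ := fun x => ((p x : ℂ)) with hψ
  set w : Fin d → ℂ := S *ᵥ ψ with hw
  set t : ℝ := ∑ i, ‖w i‖^2 with ht
  -- trace = t
  have htr : ((outer fun x => (p x : ℂ)) * θ).trace = (t : ℂ) := by
    rw [trace_outer_mul, ← hSS, herm_quad hSH, ← hw, ← ht]
  have h3' : 1 - ε ^ 2 ≤ t := by rw [htr] at h3; simpa using h3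
  have ht0 : 0 < t := lt_of_lt_of_le hε2 h3'
  set c : ℝ := Real.sqrt t with hc
  have hc0 : 0 < c := Real.sqrt_pos.mpr ht0
  have hc2 : c ^ 2 = t := Real.sq_sqrt ht0.le
  set u : Fin d → ℂ := S *ᵥ w with hu
  set g : Fin d → ℝ := fun x => ‖u x‖ / c with hg
  -- diagonal bound : θ x x = Σ_j ‖S x j‖^2 and ≤ 1
  have hdiag : ∀ x, θ x x = ((∑ j, ‖S x j‖^2 : ℝ) : ℂ) := by
    intro x
    rw [← hSS, Matrix.mul_apply]
    push_cast
    refine Finset.sum_congr rfl fun j _ => ?_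
    have : S j x = (starRingEnd ℂ) (S x j) := by
      conv_lhs => rw [← hSH.eq]
      simp [Matrix.conjTranspose_apply]
    rw [this, mul_comm, conj_mul_self]; push_cast; ring
  have hdiag_le : ∀ x, (θ x x).re ≤ 1 := by
    intro x
    have h0 := h2.dotProduct_mulVec_nonneg (Pi.single x 1)
    have e : star (Pi.single x 1 : Fin d → ℂ) ⬝ᵥ
        (((1 : Matrix (Fin d) (Fin d) ℂ) - pinch θ) *ᵥ Pi.single x 1) = 1 - θ x x := by
      rw [Matrix.mulVec_single, dotProduct]
      rw [Finset.sum_eq_single x]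
      · simp [Matrix.sub_apply, Matrix.one_apply, pinch]
      · intro b _ hb
        simp [Pi.single_apply, hb]
      · simp
    rw [e, Complex.le_def] at h0
    simp only [Complex.sub_re, Complex.one_re, Complex.zero_re] at h0
    linarith [h0.1]
  -- ‖u x‖^2 ≤ (θ x x).re * t
  have hux : ∀ x, ‖u x‖^2 ≤ (θ x x).re * t := by
    intro x
    have hux' : u x = ∑ j, (starRingEnd ℂ) ((starRingEnd ℂ) (S x j)) * w j := by
      rw [hu]; simp only [Matrix.mulVec, dotProduct]
      exact Finset.sum_congr rfl fun j _ => by rw [RingHomInvPair.comp_apply_eq]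
    have := cs_aux (fun j => (starRingEnd ℂ) (S x j)) w
    rw [← hux'] at this
    have e : ∑ j, ‖(starRingEnd ℂ) (S x j)‖^2 = (θ x x).re := by
      rw [hdiag x, Complex.ofReal_re]
      exact Finset.sum_congr rfl fun j _ => by rw [RCLike.norm_conj]
    rw [e, ← ht] at this
    exact this
  have hg01 : ∀ x, 0 ≤ g x ∧ g x ≤ 1 := by
    intro x
    constructor
    · exact div_nonneg (norm_nonneg _) hc0.le
    · have h1x : ‖u x‖^2 ≤ t := le_trans (hux x) (by nlinarith [hdiag_le x, ht0])
      rw [hg]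
      rw [div_le_one hc0]
      have : ‖u x‖^2 ≤ c^2 := by rw [hc2]; exact h1x
      nlinarith [norm_nonneg (u x), hc0]
  -- sum of squares ≤ l
  have hsq : ∑ x, (g x)^2 ≤ l := by
    have hq := h1.dotProduct_mulVec_nonneg w
    have e1 : star w ⬝ᵥ (((l:ℂ) • 1 - θ) *ᵥ w) = ((l * t - ∑ x, ‖u x‖^2 : ℝ) : ℂ) := by
      rw [Matrix.sub_mulVec, dotProduct_sub, Matrix.smul_mulVec,
        Matrix.one_mulVec, dotProduct_smul, star_dot_self, ← ht, ← hSS,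
        herm_quad hSH, ← hu]
      rw [smul_eq_mul]; push_cast; ring
    rw [e1, Complex.zero_le_real, sub_nonneg] at hq
    have e2 : ∑ x, (g x)^2 = (∑ x, ‖u x‖^2) / t := by
      rw [Finset.sum_div]
      refine Finset.sum_congr rfl fun x _ => ?_
      rw [hg, div_pow, hc2]
    rw [e2, div_le_iff₀ ht0]
    linarith
  -- linear constraint
  have hlin : Real.sqrt (1 - ε ^ 2) ≤ ∑ x, g x * p x := by
    have key : (t : ℂ) = ∑ x, (starRingEnd ℂ) (u x) * ψ x := by
      rw [← star_dot_self w, hw]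
      nth_rewrite 1 [show (S *ᵥ ψ : Fin d → ℂ) = w from rfl]
      rw [herm_dot hSH w ψ]
      rfl
    have h5 : t ≤ ∑ x, ‖u x‖ * p x := by
      have : t = (↑t : ℂ).re := by simp
      rw [this, key]
      calc (∑ x, (starRingEnd ℂ) (u x) * ψ x).re ≤ ‖∑ x, (starRingEnd ℂ) (u x) * ψ x‖ :=
            Complex.re_le_norm _
        _ ≤ ∑ x, ‖(starRingEnd ℂ) (u x) * ψ x‖ := norm_sum_le _ _
        _ = ∑ x, ‖u x‖ * p x := by
            refine Finset.sum_congr rfl fun x _ => ?_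
            rw [norm_mul, RCLike.norm_conj, hψ]
            simp [Complex.norm_real, abs_of_nonneg (hp x)]
    have h6 : ∑ x, g x * p x = (∑ x, ‖u x‖ * p x) / c := by
      rw [Finset.sum_div]
      refine Finset.sum_congr rfl fun x _ => ?_
      rw [hg]; ring
    rw [h6, le_div_iff₀ hc0]
    calc Real.sqrt (1 - ε^2) * c ≤ c * c := by
          have := Real.sqrt_le_sqrt h3'
          rw [← hc] at this
          nlinarith [Real.sqrt_nonneg (1 - ε^2)]
      _ = t := by nlinarith
      _ ≤ ∑ x, ‖u x‖ * p x := h5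
  exact ⟨g, hg01, hlin, hsq⟩

lemma outer_isHermitian {d : ℕ} (v : Fin d → ℂ) : (outer v).IsHermitian := by
  ext i j; simp [outer, Matrix.conjTranspose_apply, mul_comm]

lemma outer_mulVec {d : ℕ} (v : Fin d → ℂ) (x : Fin d → ℂ) (i : Fin d) :
    (outer v *ᵥ x) i = v i * ∑ j, (starRingEnd ℂ) (v j) * x j := by
  simp only [Matrix.mulVec, dotProduct, outer, Matrix.of_apply, RCLike.star_def,
    Finset.mul_sum]
  congr 1; ext j; ring

lemma outer_posSemidef {d : ℕ} (v : Fin d → ℂ) : (outer v).PosSemidef := by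
  refine .of_dotProduct_mulVec_nonneg (outer_isHermitian v) fun x => ?_
  have : star x ⬝ᵥ (outer v *ᵥ x) =
      ((‖∑ j, (starRingEnd ℂ) (v j) * x j‖^2 : ℝ) : ℂ) := by
    simp only [dotProduct, Pi.star_apply, outer_mulVec]
    rw [← conj_mul_self, map_sum]
    rw [Finset.sum_mul]
    congr 1; ext i
    simp [RCLike.star_def]; ring
  rw [this, Complex.zero_le_real]
  positivity

lemma mem_SDP_of_g {d : ℕ} (p : Fin d → ℝ) (ε : ℝ) (hε2 : 0 ≤ 1 - ε ^ 2)
    (g : Fin d → ℝ) (hg : ∀ x, 0 ≤ g x ∧ g x ≤ 1)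
    (hsum : Real.sqrt (1 - ε ^ 2) ≤ ∑ x, g x * p x) :
    0 ≤ (∑ x, (g x) ^ 2) ∧ ∃ θ : Matrix (Fin d) (Fin d) ℂ,
    (((∑ x, (g x) ^ 2 : ℝ) : ℂ) • (1 : Matrix (Fin d) (Fin d) ℂ) - θ).PosSemidef ∧
    ((1 : Matrix (Fin d) (Fin d) ℂ) - pinch θ).PosSemidef ∧
    1 - ε ^ 2 ≤ (((outer fun x => (p x : ℂ)) * θ).trace).re ∧
    θ.PosSemidef := by
  set l : ℝ := ∑ x, (g x) ^ 2 with hl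
  have hl0 : 0 ≤ l := by positivity
  refine ⟨hl0, outer (fun x => (g x : ℂ)), ?_, ?_, ?_, outer_posSemidef _⟩
  · -- l • 1 - outer g PSD
    refine .of_dotProduct_mulVec_nonneg ?_ ?_
    · refine Matrix.IsHermitian.sub ?_ (outer_isHermitian _)
      show ((l:ℂ) • (1 : Matrix (Fin d) (Fin d) ℂ))ᴴ = (l:ℂ) • 1
      rw [Matrix.conjTranspose_smul, Matrix.conjTranspose_one, RCLike.star_def,
        Complex.conj_ofReal]
    · intro x
      set c : ℂ := ∑ j, (starRingEnd ℂ) ((g j : ℂ)) * x j with hc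
      have key : star x ⬝ᵥ (((l:ℂ) • 1 - outer (fun x => (g x : ℂ))) *ᵥ x) =
          ((l * ∑ i, ‖x i‖^2 - ‖c‖^2 : ℝ) : ℂ) := by
        rw [Matrix.sub_mulVec, dotProduct_sub]
        have e1 : star x ⬝ᵥ (((l:ℂ) • 1) *ᵥ x) = (l:ℂ) * ∑ i, ((‖x i‖^2 : ℝ) : ℂ) := by
          have e0 : star x ⬝ᵥ x = ∑ i, ((‖x i‖^2 : ℝ) : ℂ) := by
            simp only [dotProduct, Pi.star_apply, RCLike.star_def]
            exact Finset.sum_congr rfl fun i _ => conj_mul_self (x i)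
          rw [Matrix.smul_mulVec, Matrix.one_mulVec, dotProduct_smul, e0,
            smul_eq_mul]
        have e2 : star x ⬝ᵥ (outer (fun x => (g x : ℂ)) *ᵥ x) = ((‖c‖^2 : ℝ) : ℂ) := by
          simp only [dotProduct, Pi.star_apply, outer_mulVec, ← hc]
          rw [← conj_mul_self, hc, map_sum, Finset.sum_mul]
          refine Finset.sum_congr rfl fun i _ => ?_
          simp [RCLike.star_def, Complex.conj_ofReal]; ring
        rw [e1, e2]; push_cast; ring
      rw [key, Complex.zero_le_real]
      have hcs := cs_aux (fun j => ((g j : ℂ))) x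
      have hgnorm : ∑ i, ‖((g i : ℂ))‖^2 = l := by
        rw [hl]
        refine Finset.sum_congr rfl fun i _ => ?_
        rw [Complex.norm_real, Real.norm_eq_abs, sq_abs]
      rw [hgnorm, ← hc] at hcs
      linarith
  · -- pinch
    have hpinch : pinch (outer fun x => (g x : ℂ)) = Matrix.diagonal (fun x => (((g x)^2 : ℝ) : ℂ)) := by
      ext i j
      simp only [pinch, outer, Matrix.diagonal, Matrix.of_apply, RCLike.star_def,
        Complex.conj_ofReal]
      split <;> push_cast <;> ring
    rw [hpinch, show (1 : Matrix (Fin d) (Fin d) ℂ) = Matrix.diagonal (fun _ => 1) from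
      (Matrix.diagonal_one).symm, Matrix.diagonal_sub, Matrix.posSemidef_diagonal_iff]
    intro i
    rw [show ((1:ℂ) - (((g i)^2 : ℝ) : ℂ)) = ((1 - (g i)^2 : ℝ) : ℂ) by push_cast; ring]
    rw [Complex.zero_le_real]
    nlinarith [(hg i).1, (hg i).2]
  · -- trace
    have key : (((outer fun x => (p x : ℂ)) * outer (fun x => (g x : ℂ))).trace) =
        (((∑ x, g x * p x)^2 : ℝ) : ℂ) := by
      push_cast
      rw [sq, Finset.sum_mul_sum]
      simp only [Matrix.trace, Matrix.diag, Matrix.mul_apply, outer, Matrix.of_apply,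
        RCLike.star_def, Complex.conj_ofReal]
      rw [Finset.sum_comm]
      refine Finset.sum_congr rfl fun i _ => ?_
      refine Finset.sum_congr rfl fun j _ => ?_
      ring
    rw [key]
    simp only [Complex.ofReal_re]
    have h0 : 0 ≤ Real.sqrt (1 - ε^2) := Real.sqrt_nonneg _
    nlinarith [Real.sq_sqrt hε2, hsum]

/-- `f_SDP(P_X, ε) = f_QP(P_X, ε)` for every probability distribution `P_X`. -/
theorem fSDP_eq_fQP {d : ℕ} (p : Fin d → ℝ) (hp : ∀ x, 0 ≤ p x)
    (hps : ∑ x, p x = 1) (ε : ℝ) (hε : ε ∈ Set.Ioo (0 : ℝ) 1) :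
    fSDP p ε = fQP p ε := by
  obtain ⟨hε0, hε1⟩ := hε
  have hε2 : 0 < 1 - ε ^ 2 := by nlinarith
  rw [fSDP, fQP]
  set Sqp := {v : ℝ | ∃ g : Fin d → ℝ, (∀ x, 0 ≤ g x ∧ g x ≤ 1) ∧
    Real.sqrt (1 - ε ^ 2) ≤ ∑ x, g x * p x ∧ v = ∑ x, (g x) ^ 2} with hSqp
  set Ssdp := {l : ℝ | 0 ≤ l ∧ ∃ θ : Matrix (Fin d) (Fin d) ℂ,
    ((l : ℂ) • (1 : Matrix (Fin d) (Fin d) ℂ) - θ).PosSemidef ∧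
    ((1 : Matrix (Fin d) (Fin d) ℂ) - pinch θ).PosSemidef ∧
    1 - ε ^ 2 ≤ (((outer fun x => (p x : ℂ)) * θ).trace).re ∧
    θ.PosSemidef} with hSsdp
  have bdd_sdp : BddBelow Ssdp := ⟨0, fun l hl => hl.1⟩
  have bdd_qp : BddBelow Sqp := by
    refine ⟨0, ?_⟩
    rintro v ⟨g, _, _, rfl⟩
    positivity
  have hg1 : ∀ x : Fin d, 0 ≤ (1:ℝ) ∧ (1:ℝ) ≤ 1 := fun x => ⟨zero_le_one, le_refl 1⟩
  have hsum1 : Real.sqrt (1 - ε ^ 2) ≤ ∑ x, (1:ℝ) * p x := by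
    simp only [one_mul]
    rw [hps]
    exact Real.sqrt_le_one.mpr (by nlinarith)
  have qp_ne : Sqp.Nonempty := ⟨∑ x : Fin d, (1:ℝ)^2, fun _ => (1:ℝ), hg1, hsum1, rfl⟩
  have sdp_ne : Ssdp.Nonempty := by
    have := mem_SDP_of_g p ε hε2.le (fun _ => (1:ℝ)) hg1 hsum1
    exact ⟨∑ x : Fin d, (1:ℝ)^2, this⟩
  apply le_antisymm
  · apply le_csInf qp_ne
    rintro v ⟨g, hg, hs, rfl⟩
    exact csInf_le bdd_sdp (mem_SDP_of_g p ε hε2.le g hg hs)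
  · apply le_csInf sdp_ne
    rintro l ⟨hl0, θ, h1, h2, h3, h4⟩
    obtain ⟨g, hg, hlin, hsq⟩ := exists_g_of_SDP p hp ε hε2 l θ h1 h2 h3 h4
    calc sInf Sqp ≤ ∑ x, (g x)^2 := csInf_le bdd_qp ⟨g, hg, hlin, rfl⟩
      _ ≤ l := hsq
end
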